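/- For the infinite-allele model on the balanced quartet, d_KL(P₀, P_ε) ≥ ζ·e^{-4λL}, where ζ = 1 - e^{-λε}. -/
import Mathlib

open Real

lemma term_bound (P D z : ℝ) (hP : 0 < P) (hD : 0 ≤ D) (hz : 0 < z) (hz1 : z < 1) :
    (1 - z) * (P - D) ≤ -(P * log (1 - (1 - z) * ((P - D) / P))) := by
  have hζ : 0 < 1 - z := by linarith
  have heq : 1 - (1 - z) * ((P - D) / P) = z + (1 - z) * (D / P) := by
    field_simp; ring
  have hpos : 0 < 1 - (1 - z) * ((P - D) / P) := by rw [heq]; positivity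
  have hlog := Real.log_le_sub_one_of_pos hpos
  have hmul : P * ((1 - z) * ((P - D) / P)) = (1 - z) * (P - D) := by
    field_simp
  nlinarith [mul_le_mul_of_nonneg_left hlog hP.le]

lemma five_sum (z e4 P1 P2 P3 P4 P5 D4 D5 : ℝ)
    (hP1 : 0 < P1) (hP2 : 0 < P2) (hP3 : 0 < P3) (hP4 : 0 < P4) (hP5 : 0 < P5)
    (hD4 : 0 ≤ D4) (hD5 : 0 ≤ D5) (hz0 : 0 < z) (hz1 : z < 1)
    (hsum : P1 + P2 + P3 + P4 + P5 - D4 - D5 = e4) :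
    (1 - z) * e4 ≤
      -(P1 * log (1 - (1 - z) * ((P1 - 0) / P1)) + P2 * log (1 - (1 - z) * ((P2 - 0) / P2)) +
        P3 * log (1 - (1 - z) * ((P3 - 0) / P3)) + P4 * log (1 - (1 - z) * ((P4 - D4) / P4)) +
        P5 * log (1 - (1 - z) * ((P5 - D5) / P5))) := by
  have h1 := term_bound P1 0 z hP1 le_rfl hz0 hz1
  have h2 := term_bound P2 0 z hP2 le_rfl hz0 hz1
  have h3 := term_bound P3 0 z hP3 le_rfl hz0 hz1
  have h4 := term_bound P4 D4 z hP4 hD4 hz0 hz1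
  have h5 := term_bound P5 D5 z hP5 hD5 hz0 hz1
  nlinarith [h1, h2, h3, h4, h5]

theorem kl_lower_bound (L lam ε : ℝ) (hL : 0 < L) (hlam : 0 < lam) (hε : 0 < ε) :
    let y : ℝ := 1 - exp (-lam * L)
    let ζ : ℝ := 1 - exp (-lam * ε)
    let P1 : ℝ := (1 - y) ^ 4
    let P2 : ℝ := 4 * y * (1 - y) ^ 3
    let P3 : ℝ := 4 * y ^ 2 * (1 - y) ^ 2
    let P4 : ℝ := 2 * y ^ 2 * (1 - y) ^ 2
    let P5 : ℝ := 4 * y ^ 3 * (1 - y) + y ^ 4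
    let D4 : ℝ := 2 * exp (-2 * lam * L) * (1 - exp (-2 * lam * L))
    let D5 : ℝ := (1 - exp (-2 * lam * L)) ^ 2
    ζ * exp (-4 * lam * L) ≤
      -(P1 * log (1 - ζ * ((P1 - 0) / P1)) + P2 * log (1 - ζ * ((P2 - 0) / P2)) +
        P3 * log (1 - ζ * ((P3 - 0) / P3)) + P4 * log (1 - ζ * ((P4 - D4) / P4)) +
        P5 * log (1 - ζ * ((P5 - D5) / P5))) := by
  intro y ζ P1 P2 P3 P4 P5 D4 D5
  have he0 : 0 < exp (-lam * L) := exp_pos _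
  have he1 : exp (-lam * L) < 1 := by
    rw [show (1:ℝ) = exp 0 by simp]; exact exp_lt_exp.mpr (by nlinarith)
  have hz0 : 0 < exp (-lam * ε) := exp_pos _
  have hz1 : exp (-lam * ε) < 1 := by
    rw [show (1:ℝ) = exp 0 by simp]; exact exp_lt_exp.mpr (by nlinarith)
  have hy0 : 0 < y := by simp only [y]; linarith
  have hy1 : 1 - y = exp (-lam * L) := by simp only [y]; ring
  have he2 : exp (-2 * lam * L) = exp (-lam * L) ^ 2 := by
    rw [← exp_nat_mul]; ring_nf
  have he4 : exp (-4 * lam * L) = exp (-lam * L) ^ 4 := by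
    rw [← exp_nat_mul]; ring_nf
  have hP1p : 0 < P1 := by simp only [P1, hy1]; positivity
  have hP2p : 0 < P2 := by simp only [P2, hy1]; positivity
  have hP3p : 0 < P3 := by simp only [P3, hy1]; positivity
  have hP4p : 0 < P4 := by simp only [P4, hy1]; positivity
  have hP5p : 0 < P5 := by
    simp only [P5]
    have : 0 < 4 * y ^ 3 * (1 - y) := by rw [hy1]; positivity
    nlinarith [pow_pos hy0 4]
  have he21 : exp (-2 * lam * L) ≤ 1 := by nlinarith [he2]
  have hD4n : 0 ≤ D4 := by
    simp only [D4]
    apply mul_nonneg (by positivity) (by linarith)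
  have hD5n : 0 ≤ D5 := by simp only [D5]; positivity
  have hsum : P1 + P2 + P3 + P4 + P5 - D4 - D5 = exp (-4 * lam * L) := by
    simp only [P1, P2, P3, P4, P5, D4, D5, y, he2, he4]; ring
  exact five_sum (exp (-lam * ε)) (exp (-4 * lam * L)) P1 P2 P3 P4 P5 D4 D5
    hP1p hP2p hP3p hP4p hP5p hD4n hD5n hz0 hz1 hsum
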